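/- Let G = ([k],E) be a directed graph and let S = {(a_1,b_1,B_1),…,(a_m,b_m,B_m)} be an ℓ-filtering set for G, where each B_i is enumerated as (B_i)_1,…,(B_i)_{|B_i|}. For 1 ≤ i ≤ m and 1 ≤ j ≤ |B_i| define row(i,j) = 1 + j + Σ_{u < i, a_u = a_i} |B_u|. Then row(i,j) ≤ ℓ for all such (i,j), and there exist permutations π_1,…,π_ℓ of [k] with π_1 the identity such that for all 1 ≤ i ≤ m and 1 ≤ j ≤ |B_i|: π_{row(i,j)}(a_i) = a_i, π_{row(i,j)}(b_i) = (B_i)_j, and π_{row(i,j)}(B_i) = (B_i ∪ {b_i}) \ {(B_i)_j}. -/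

import Mathlib

/-- An enumerated `ℓ`-filtering set `S = {(a_1,b_1,B_1),…,(a_m,b_m,B_m)}` for the
directed graph `G = ([k],E)`, where each `B_i` is enumerated (without repetitions)
by the list `L i`.  The conditions are those of a filtering set:  `a_i ≠ b_i`,
`B_i ⊆ N̄_G(a_i)`, `a_i ∉ B_i`, `b_i ∉ B_i`; for distinct indices `i ≠ i'`:
`a_i ∉ {b_{i'}} ∪ B_{i'}` and `({b_i} ∪ B_i) ∩ ({b_{i'}} ∪ B_{i'}) = ∅`; and
`R(S) = max_v Σ_{a_i = v} |B_i| ≤ ℓ - 1`. -/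
def FamFilteringSet (k ℓ m : ℕ) (E : Fin k → Fin k → Prop)
    (a b : Fin m → Fin k) (L : Fin m → List (Fin k)) : Prop :=
  (∀ i, (L i).Nodup) ∧
    (∀ i, a i ≠ b i ∧ (∀ c ∈ L i, ¬ E (a i) c) ∧ a i ∉ L i ∧ b i ∉ L i) ∧
    (∀ i i' : Fin m, i ≠ i' →
      a i ∉ insert (b i') (L i').toFinset ∧
        insert (b i) (L i).toFinset ∩ insert (b i') (L i').toFinset = ∅) ∧
    ∀ v : Fin k, ∑ i ∈ Finset.univ.filter (fun i => a i = v), (L i).length ≤ ℓ - 1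

/-- `row(i,j)` from the proof of Theorem 2 of the paper, with the enumeration index
`j` of `B_i` taken 0-based (so `row(i,j) = 1 + (j+1) + Σ_{u < i, a_u = a_i} |B_u|`). -/
def rowFn {k m : ℕ} (a : Fin m → Fin k) (L : Fin m → List (Fin k))
    (i : Fin m) (j : ℕ) : ℕ :=
  2 + j + ∑ u ∈ Finset.univ.filter (fun u => u < i ∧ a u = a i), (L u).length

/-- If every factor fixes `x`, then the noncommutative product fixes `x`. -/
lemma noncommProd_apply_eq_self {ι α : Type*} (s : Finset ι)
    (g : ι → Equiv.Perm α) (comm) (x : α)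
    (hx : ∀ i ∈ s, g i x = x) : s.noncommProd g comm x = x := by
  classical
  induction s using Finset.cons_induction with
  | empty => simp
  | cons i s hi ih =>
    rw [Finset.noncommProd_cons, Equiv.Perm.mul_apply,
      ih _ (fun i hi => hx i (Finset.mem_cons.2 (Or.inr hi)))]
    exact hx i (Finset.mem_cons.2 (Or.inl rfl))

/-- **matrix construction in the proof of Theorem 2.**
Given an `ℓ`-filtering set for `G`, we have `row(i,j) ≤ ℓ` for all `i` and all
positions `j` in the enumeration of `B_i`, and there exist permutations
`π_1,…,π_ℓ` of `[k]` with `π_1` the identity such that for all `i, j`: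
`π_{row(i,j)}(a_i) = a_i`, `π_{row(i,j)}(b_i) = (B_i)_j`, and
`π_{row(i,j)}(B_i) = (B_i ∪ {b_i}) \ {(B_i)_j}`. -/
theorem exists_row_permutations (k ℓ m : ℕ) (E : Fin k → Fin k → Prop)
    (a b : Fin m → Fin k) (L : Fin m → List (Fin k))
    (hS : FamFilteringSet k ℓ m E a b L) :
    (∀ (i : Fin m) (j : Fin (L i).length), rowFn a L i j ≤ ℓ) ∧
      ∃ πs : ℕ → Equiv.Perm (Fin k), πs 1 = Equiv.refl (Fin k) ∧
        ∀ (i : Fin m) (j : Fin (L i).length),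
          πs (rowFn a L i j) (a i) = a i ∧
          πs (rowFn a L i j) (b i) = (L i).get j ∧
          (L i).toFinset.image (πs (rowFn a L i j)) =
            insert (b i) (L i).toFinset \ {(L i).get j} := by
  obtain ⟨hnd, hloc, hdisj, hsum⟩ := hS
  -- row bound
  have hrow : ∀ (i : Fin m) (j : Fin (L i).length), rowFn a L i j ≤ ℓ := by
    intro i j
    have hℓ : 1 ≤ ℓ - 1 → 1 + (ℓ - 1) ≤ ℓ := by omega
    have hins : insert i (Finset.univ.filter (fun u => u < i ∧ a u = a i))
        ⊆ Finset.univ.filter (fun u => a u = a i) := by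
      intro u hu
      simp only [Finset.mem_insert, Finset.mem_filter] at hu ⊢
      rcases hu with rfl | ⟨_, _, h⟩ <;> simp [*]
    have hni : i ∉ Finset.univ.filter (fun u => u < i ∧ a u = a i) := by simp
    have h1 : (L i).length + ∑ u ∈ Finset.univ.filter (fun u => u < i ∧ a u = a i),
        (L u).length ≤ ∑ u ∈ Finset.univ.filter (fun u => a u = a i), (L u).length :=
      le_trans (le_of_eq (Finset.sum_insert (f := fun u => (L u).length) hni).symm)
        (Finset.sum_le_sum_of_subset hins)
    have h2 := hsum (a i)
    have hj : (j : ℕ) + 1 ≤ (L i).length := j.2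
    have hpos : 1 ≤ (L i).length := le_trans (by omega) hj
    unfold rowFn
    omega
  refine ⟨hrow, ?_⟩
  classical
  -- the swap associated to index i at row r (identity if i has no entry in row r)
  set g : ℕ → Fin m → Equiv.Perm (Fin k) := fun r i =>
    if h : ∃ j : Fin (L i).length, rowFn a L i j = r then
      Equiv.swap (b i) ((L i).get h.choose) else 1 with hg
  -- key facts
  have hmem : ∀ (r : ℕ) (i : Fin m) (x : Fin k),
      x ∉ insert (b i) (L i).toFinset → g r i x = x := by
    intro r i x hx
    rw [hg]
    dsimp only
    split
    · next h =>
      have h1 : x ≠ b i := fun e => hx (by simp [e])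
      have h2 : x ≠ (L i).get h.choose := fun e => hx (by
        simp only [Finset.mem_insert, List.mem_toFinset, e]
        exact Or.inr (List.get_mem (L i) _))
      exact Equiv.swap_apply_of_ne_of_ne h1 h2
    · rfl
  have hmemin : ∀ (r : ℕ) (i : Fin m) (x : Fin k),
      x ∈ insert (b i) (L i).toFinset → g r i x ∈ insert (b i) (L i).toFinset := by
    intro r i x hx
    rw [hg]
    dsimp only
    split
    · next h =>
      by_cases h1 : x = b i
      · simp only [h1, Equiv.swap_apply_left, Finset.mem_insert, List.mem_toFinset]
        exact Or.inr (List.get_mem (L i) _)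
      by_cases h2 : x = (L i).get h.choose
      · simp [h2, Equiv.swap_apply_right]
      · rw [Equiv.swap_apply_of_ne_of_ne h1 h2]; exact hx
    · exact hx
  have hdisj' : ∀ (i i' : Fin m), i ≠ i' → ∀ x ∈ insert (b i) (L i).toFinset,
      x ∉ insert (b i') (L i').toFinset := by
    intro i i' hne x hx hx'
    have := (hdisj i i' hne).2
    have : x ∈ (insert (b i) (L i).toFinset ∩ insert (b i') (L i').toFinset) :=
      Finset.mem_inter.2 ⟨hx, hx'⟩
    rw [(hdisj i i' hne).2] at this
    exact absurd this (Finset.notMem_empty x)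
  -- commutation
  have hcomm : ∀ r : ℕ, ((Finset.univ : Finset (Fin m)) : Set (Fin m)).Pairwise
      (Function.onFun Commute (g r)) := by
    intro r i _ i' _ hne
    apply Equiv.Perm.Disjoint.commute
    intro x
    by_cases hx : x ∈ insert (b i) (L i).toFinset
    · exact Or.inr (hmem r i' x (hdisj' i i' hne x hx))
    · exact Or.inl (hmem r i x hx)
  refine ⟨fun r => Finset.univ.noncommProd (g r) (hcomm r), ?_, ?_⟩
  · -- row 1 is identity
    apply Equiv.ext
    intro x
    rw [Equiv.refl_apply]
    refine noncommProd_apply_eq_self _ _ _ _ (fun i _ => ?_)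
    rw [hg]
    dsimp only
    split
    · next h =>
      exfalso
      obtain ⟨j, hj⟩ := h
      unfold rowFn at hj; omega
    · rfl
  · intro i j
    set r := rowFn a L i j with hr
    -- the factor at i is the swap with the chosen j, and the chosen j equals j
    have hex : ∃ j' : Fin (L i).length, rowFn a L i j' = r := ⟨j, rfl⟩
    have hjj : hex.choose = j := by
      have h1 : rowFn a L i ↑hex.choose = rowFn a L i ↑j := hex.choose_spec
      generalize hex.choose = c at h1 ⊢
      unfold rowFn at h1
      exact Fin.ext (by omega)
    have hgi : g r i = Equiv.swap (b i) ((L i).get j) := by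
      rw [hg]
      dsimp only
      rw [dif_pos hex, hjj]
    have hbne : b i ≠ (L i).get j := fun e =>
      (hloc i).2.2.2 (e ▸ List.get_mem (L i) j)
    have haB : a i ∉ insert (b i) (L i).toFinset := by
      simp only [Finset.mem_insert, List.mem_toFinset]
      push_neg
      exact ⟨(hloc i).1, (hloc i).2.2.1⟩
    have hfixa : ∀ i' : Fin m, g r i' (a i) = a i := by
      intro i'
      by_cases hne : i' = i
      · rw [hne]; exact hmem r i (a i) haB
      · exact hmem r i' (a i) (fun h => (hdisj i i' (Ne.symm hne)).1 h)
    have hswap_other : ∀ (i' : Fin m), i' ≠ i → ∀ x ∈ insert (b i) (L i).toFinset,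
        g r i' x = x := fun i' hne x hx => hmem r i' x (hdisj' i i' (Ne.symm hne) x hx)
    have happly : ∀ x ∈ insert (b i) (L i).toFinset,
        Finset.univ.noncommProd (g r) (hcomm r) x = Equiv.swap (b i) ((L i).get j) x := by
      intro x hx
      rw [← hgi]
      rw [← Finset.mul_noncommProd_erase Finset.univ (Finset.mem_univ i) (g r) (hcomm r)]
      have h1 := noncommProd_apply_eq_self (Finset.univ.erase i) (g r)
          ((hcomm r).mono (Finset.coe_subset.2 (Finset.erase_subset _ _))) x
          (fun i' hi' => hswap_other i' (Finset.ne_of_mem_erase hi') x hx)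
      simp [Equiv.Perm.mul_apply, h1]
    refine ⟨?_, ?_, ?_⟩
    · exact noncommProd_apply_eq_self _ _ _ _ (fun i' _ => hfixa i')
    · rw [happly (b i) (Finset.mem_insert_self _ _), Equiv.swap_apply_left]
    · -- image statement
      have himg : ∀ x ∈ (L i).toFinset,
          Finset.univ.noncommProd (g r) (hcomm r) x = Equiv.swap (b i) ((L i).get j) x :=
        fun x hx => happly x (Finset.mem_insert_of_mem hx)
      rw [Finset.image_congr (fun x hx => himg x hx)]
      ext y
      simp only [Finset.mem_image, Finset.mem_sdiff, Finset.mem_insert,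
        Finset.mem_singleton, List.mem_toFinset]
      constructor
      · rintro ⟨x, hx, rfl⟩
        by_cases h1 : x = b i
        · exact absurd (h1 ▸ hx) (hloc i).2.2.2
        by_cases h2 : x = (L i).get j
        · subst h2
          rw [Equiv.swap_apply_right]
          exact ⟨Or.inl rfl, by simpa [List.get_eq_getElem] using hbne⟩
        · rw [Equiv.swap_apply_of_ne_of_ne h1 h2]
          exact ⟨Or.inr hx, h2⟩
      · rintro ⟨hy1, hy2⟩
        rcases hy1 with rfl | hy
        · exact ⟨(L i).get j, List.get_mem (L i) j, Equiv.swap_apply_right _ _⟩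
        · refine ⟨y, hy, ?_⟩
          have h1 : y ≠ b i := fun e => (hloc i).2.2.2 (e ▸ hy)
          exact Equiv.swap_apply_of_ne_of_ne h1 hy2
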